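/- Let m ≥ 2, and let p and q be two distinct pinned vertices attached to vertices x ∈ V and y ∈ V respectively. Suppose the underlying graph of the voltage digraph contains a path from x to y consisting of ℓ−2 steps through pairwise distinct vertices (ℓ ≥ 2; when ℓ = 2 the path is trivial and x = y). Then the lift with pinned vertices contains a cycle of length 2ℓ passing through both p and q. -/

import Mathlib

/-- A voltage digraph over `ZMod m`: an irreflexive arc set `A ⊆ V × V` together with a
voltage function assigning to each arc an element of `ZMod m`. -/
structure VoltageDigraph (V : Type) (m : ℕ) where
  A : Set (V × V)
  irrefl : ∀ v : V, (v, v) ∉ A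
  vol : V × V → ZMod m

namespace VoltageDigraph

variable {V : Type} {m : ℕ}

/-- The underlying simple graph of a voltage digraph: `v` is adjacent to `w` iff
`(v,w) ∈ A` or `(w,v) ∈ A`. -/
def underlying (D : VoltageDigraph V m) : SimpleGraph V where
  Adj v w := (v, w) ∈ D.A ∨ (w, v) ∈ D.A
  symm := ⟨fun v w h => h.symm⟩
  loopless := ⟨fun v h => h.elim (D.irrefl v) (D.irrefl v)⟩

/-- The lift of a voltage digraph: the simple graph on `V × ZMod m` in which `(v,i)` and
`(w,j)` are adjacent iff `(v,w) ∈ A` and `j = i + vol (v,w)`, or `(w,v) ∈ A` and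
`i = j + vol (w,v)`. -/
def lift (D : VoltageDigraph V m) : SimpleGraph (V × ZMod m) where
  Adj p q := ((p.1, q.1) ∈ D.A ∧ q.2 = p.2 + D.vol (p.1, q.1)) ∨
    ((q.1, p.1) ∈ D.A ∧ p.2 = q.2 + D.vol (q.1, p.1))
  symm := ⟨fun p q h => h.symm⟩
  loopless := ⟨fun p h => h.elim (fun h' => D.irrefl p.1 h'.1) (fun h' => D.irrefl p.1 h'.1)⟩

/-- The signed voltage of a single step `v → w` of a walk in the underlying graph:
`vol (v,w)` if the step traverses the arc `(v,w)` from tail to head, and `- vol (w,v)`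
otherwise (i.e. if it traverses the arc `(w,v)` from head to tail). -/
noncomputable def netStep (D : VoltageDigraph V m) (v w : V) : ZMod m := by
  classical exact if (v, w) ∈ D.A then D.vol (v, w) else - D.vol (w, v)

/-- The net voltage of a walk in the underlying graph: the sum of the signed voltages of
its steps. -/
noncomputable def netVoltage (D : VoltageDigraph V m) {u v : V}
    (w : D.underlying.Walk u v) : ZMod m :=
  (w.darts.map (fun d => D.netStep d.fst d.snd)).sum

/-- The lift with pinned vertices: the lift graph augmented by one extra vertex for each
pinned vertex `p` (attached to `attach p ∈ V`), adjacent to `(attach p, i)` for every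
`i : ZMod m`. -/
def pinnedLift (D : VoltageDigraph V m) {P : Type} (attach : P → V) :
    SimpleGraph ((V × ZMod m) ⊕ P) :=
  SimpleGraph.fromRel (fun a b =>
    (∃ u v : V × ZMod m, a = Sum.inl u ∧ b = Sum.inl v ∧ D.lift.Adj u v) ∨
    (∃ (p : P) (u : V × ZMod m), a = Sum.inr p ∧ b = Sum.inl u ∧ attach p = u.1))

end VoltageDigraph

namespace VoltageDigraph

open SimpleGraph

variable {V : Type} {m : ℕ}

lemma netVoltage_nil (D : VoltageDigraph V m) {u : V} :
    D.netVoltage (SimpleGraph.Walk.nil : D.underlying.Walk u u) = 0 := by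
  simp [netVoltage]

lemma netVoltage_cons (D : VoltageDigraph V m) {u b v : V} (h : D.underlying.Adj u b)
    (w : D.underlying.Walk b v) :
    D.netVoltage (SimpleGraph.Walk.cons h w) = D.netStep u b + D.netVoltage w := by
  simp [netVoltage]

lemma lift_adj_step (D : VoltageDigraph V m) {u b : V} (h : D.underlying.Adj u b) (i : ZMod m) :
    D.lift.Adj (u, i) (b, i + D.netStep u b) := by
  classical
  by_cases ha : (u, b) ∈ D.A
  · exact Or.inl ⟨ha, by simp [netStep, ha]⟩
  · have hb : (b, u) ∈ D.A := h.resolve_left ha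
    refine Or.inr ⟨hb, ?_⟩
    simp [netStep, ha]

noncomputable def liftWalk (D : VoltageDigraph V m) :
    ∀ {u v : V} (w : D.underlying.Walk u v) (i : ZMod m),
      D.lift.Walk (u, i) (v, i + D.netVoltage w)
  | _, _, .nil, i => SimpleGraph.Walk.nil.copy rfl (by simp [netVoltage_nil])
  | _, _, .cons h w, i =>
      (SimpleGraph.Walk.cons (D.lift_adj_step h i)
        (D.liftWalk w (i + D.netStep _ _))).copy rfl
        (by rw [netVoltage_cons, add_assoc])

lemma liftWalk_length (D : VoltageDigraph V m) :
    ∀ {u v : V} (w : D.underlying.Walk u v) (i : ZMod m),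
      (D.liftWalk w i).length = w.length
  | _, _, .nil, i => by simp [liftWalk]
  | _, _, .cons h w, i => by
      simp [liftWalk, liftWalk_length D w]

lemma liftWalk_support_map_fst (D : VoltageDigraph V m) :
    ∀ {u v : V} (w : D.underlying.Walk u v) (i : ZMod m),
      (D.liftWalk w i).support.map Prod.fst = w.support
  | _, _, .nil, i => by simp [liftWalk]
  | _, _, .cons h w, i => by
      simp [liftWalk, liftWalk_support_map_fst D w]

lemma liftWalk_support_add (D : VoltageDigraph V m) :
    ∀ {u v : V} (w : D.underlying.Walk u v) (i j : ZMod m),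
      (D.liftWalk w (i + j)).support
        = (D.liftWalk w i).support.map (fun z => (z.1, z.2 + j))
  | _, _, .nil, i, j => by simp [liftWalk]
  | _, _, @SimpleGraph.Walk.cons _ _ u b v h w, i, j => by
      have heq : i + j + D.netStep u b = (i + D.netStep u b) + j := by ring
      simp only [liftWalk, SimpleGraph.Walk.support_copy, SimpleGraph.Walk.support_cons,
        List.map_cons, heq, liftWalk_support_add D w]
      congr 1
      rw [List.map_map, List.map_map]
      apply List.map_congr_left
      intro z _
      simp [Function.comp, add_right_comm]

/-- The inclusion of the lift into the pinned lift. -/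
def inlHom (D : VoltageDigraph V m) {P : Type} (attach : P → V) :
    D.lift →g D.pinnedLift attach where
  toFun := Sum.inl
  map_rel' := fun {u v} h => by
    rw [pinnedLift, SimpleGraph.fromRel_adj]
    exact ⟨by simpa using h.ne, Or.inl (Or.inl ⟨u, v, rfl, rfl, h⟩)⟩

@[simp] lemma inlHom_apply (D : VoltageDigraph V m) {P : Type} (attach : P → V)
    (u : V × ZMod m) : D.inlHom attach u = Sum.inl u := rfl

lemma pin_adj (D : VoltageDigraph V m) {P : Type} (attach : P → V) (r : P)
    (u : V × ZMod m) (h : attach r = u.1) :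
    (D.pinnedLift attach).Adj (Sum.inr r) (Sum.inl u) := by
  rw [pinnedLift, SimpleGraph.fromRel_adj]
  exact ⟨by simp, Or.inl (Or.inr ⟨r, u, rfl, rfl, h⟩)⟩

end VoltageDigraph

/-- if `p` and `q` are distinct pinned vertices attached to `x` and `y`, and
the underlying graph contains a path of `ℓ - 2` steps from `x` to `y` (with `ℓ ≥ 2`, the
trivial path forcing `x = y` when `ℓ = 2`), then the lift with pinned vertices contains a
cycle of length `2ℓ` passing through both pinned vertices. -/
theorem statement7 {V P : Type} [Fintype V] [Fintype P] {m : ℕ} (hm : 2 ≤ m)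
    (D : VoltageDigraph V m) (attach : P → V) (p q : P) (hpq : p ≠ q)
    (x y : V) (hx : attach p = x) (hy : attach q = y)
    (ℓ : ℕ) (hℓ : 2 ≤ ℓ)
    (pw : D.underlying.Walk x y) (hpath : pw.IsPath) (hlen : pw.length = ℓ - 2) :
    ∃ c : (D.pinnedLift attach).Walk (Sum.inr p) (Sum.inr p),
      c.IsCycle ∧ c.length = 2 * ℓ ∧ (Sum.inr q : (V × ZMod m) ⊕ P) ∈ c.support := by
  classical
  haveI : Fact (1 < m) := ⟨hm⟩
  subst hx
  subst hy
  let f := D.inlHom attach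
  have h1 : (D.pinnedLift attach).Adj (Sum.inr p) (Sum.inl (attach p, (0 : ZMod m))) :=
    D.pin_adj attach p _ rfl
  have h2 : (D.pinnedLift attach).Adj (Sum.inl (attach q, 0 + D.netVoltage pw)) (Sum.inr q) :=
    (D.pin_adj attach q _ rfl).symm
  have h3 : (D.pinnedLift attach).Adj (Sum.inr q) (Sum.inl (attach q, 1 + D.netVoltage pw)) :=
    D.pin_adj attach q _ rfl
  have h4 : (D.pinnedLift attach).Adj (Sum.inl (attach p, (1 : ZMod m))) (Sum.inr p) :=
    (D.pin_adj attach p _ rfl).symm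
  let w1 : (D.pinnedLift attach).Walk (Sum.inl (attach p, (0 : ZMod m)))
      (Sum.inl (attach q, 0 + D.netVoltage pw)) := (D.liftWalk pw 0).map f
  let w2 : (D.pinnedLift attach).Walk (Sum.inl (attach p, (1 : ZMod m)))
      (Sum.inl (attach q, 1 + D.netVoltage pw)) := (D.liftWalk pw 1).map f
  let rest : (D.pinnedLift attach).Walk (Sum.inl (attach p, (0 : ZMod m))) (Sum.inr p) :=
    w1.append (SimpleGraph.Walk.cons h2 (SimpleGraph.Walk.cons h3
      (w2.reverse.append (SimpleGraph.Walk.cons h4 SimpleGraph.Walk.nil))))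
  set S0 := (D.liftWalk pw 0).support with hS0def
  set S1 := (D.liftWalk pw 1).support with hS1def
  have hS0fst : S0.map Prod.fst = pw.support := D.liftWalk_support_map_fst pw 0
  have hS1fst : S1.map Prod.fst = pw.support := D.liftWalk_support_map_fst pw 1
  have hS0fstnd : (S0.map Prod.fst).Nodup := by rw [hS0fst]; exact hpath.support_nodup
  have hS1fstnd : (S1.map Prod.fst).Nodup := by rw [hS1fst]; exact hpath.support_nodup
  have hS0nd : S0.Nodup := List.Nodup.of_map _ hS0fstnd
  have hS1nd : S1.Nodup := List.Nodup.of_map _ hS1fstnd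
  have hS1 : S1 = S0.map (fun z => (z.1, z.2 + 1)) := by
    have h := D.liftWalk_support_add pw 0 1
    rwa [zero_add] at h
  have hdisj : ∀ z ∈ S0, z ∉ S1 := by
    intro z hz0 hz1
    rw [hS1] at hz1
    obtain ⟨a, ha, hza⟩ := List.mem_map.1 hz1
    have hfst : Prod.fst z = Prod.fst a := by rw [← hza]
    have hza' : z = a := List.inj_on_of_nodup_map hS0fstnd hz0 ha hfst
    rw [hza'] at hza
    have : a.2 + 1 = a.2 := congrArg Prod.snd hza
    simpa using this
  have hsup : rest.support
      = (S0.map Sum.inl) ++ (Sum.inr q :: ((S1.map Sum.inl).reverse ++ [Sum.inr p])) := by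
    simp only [rest]
    rw [SimpleGraph.Walk.support_append, SimpleGraph.Walk.support_cons,
      SimpleGraph.Walk.support_cons, SimpleGraph.Walk.support_append,
      SimpleGraph.Walk.support_reverse]
    simp only [w1, w2]
    erw [SimpleGraph.Walk.support_map, SimpleGraph.Walk.support_map]
    simp
    rfl
  have hx0 : (attach p, (0 : ZMod m)) ∈ S0 := by
    rw [hS0def]; exact SimpleGraph.Walk.start_mem_support _
  have hnd : rest.support.Nodup := by
    rw [hsup]
    rw [List.nodup_append]
    refine ⟨hS0nd.map Sum.inl_injective, ?_, ?_⟩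
    · rw [List.nodup_cons]
      constructor
      · simp [Ne.symm hpq]
      · rw [List.nodup_append]
        refine ⟨List.nodup_reverse.2 (hS1nd.map Sum.inl_injective), List.nodup_singleton _, ?_⟩
        simp
    · intro a ha b hb hab
      subst hab
      obtain ⟨z, hz, rfl⟩ := List.mem_map.1 ha
      simp only [List.mem_cons, List.mem_append, List.mem_reverse, List.mem_map,
        List.mem_singleton] at hb
      rcases hb with hb | hb | hb
      · exact absurd hb (by simp)
      · obtain ⟨z', hz', hzz⟩ := hb
        have : z' = z := Sum.inl_injective hzz
        subst this
        exact hdisj z' hz hz'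
      · exact absurd hb (by simp)
  refine ⟨SimpleGraph.Walk.cons h1 rest, ?_, ?_, ?_⟩
  · rw [SimpleGraph.Walk.cons_isCycle_iff]
    refine ⟨SimpleGraph.Walk.IsPath.mk' hnd, ?_⟩
    intro hmem
    simp only [rest, SimpleGraph.Walk.edges_append, SimpleGraph.Walk.edges_cons,
      SimpleGraph.Walk.edges_nil, List.mem_append, List.mem_cons, List.not_mem_nil,
      or_false, List.mem_singleton] at hmem
    rcases hmem with hmem | hmem | hmem | hmem | hmem
    · have := SimpleGraph.Walk.fst_mem_support_of_mem_edges _ hmem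
      simp only [w1] at this
      erw [SimpleGraph.Walk.support_map] at this
      simp [f] at this
    · rw [Sym2.eq_iff] at hmem
      rcases hmem with ⟨h, -⟩ | ⟨h, -⟩
      · exact absurd h (by simp)
      · exact hpq (Sum.inr_injective h)
    · rw [Sym2.eq_iff] at hmem
      rcases hmem with ⟨h, -⟩ | ⟨-, h⟩
      · exact hpq (Sum.inr_injective h)
      · exact absurd h (by simp)
    · have := SimpleGraph.Walk.fst_mem_support_of_mem_edges _ hmem
      rw [SimpleGraph.Walk.support_reverse, List.mem_reverse] at this
      simp only [w2] at this
      erw [SimpleGraph.Walk.support_map] at this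
      simp [f] at this
    · rw [Sym2.eq_iff] at hmem
      rcases hmem with ⟨h, -⟩ | ⟨-, h⟩
      · exact absurd h (by simp)
      · have := (Prod.ext_iff.1 (Sum.inl_injective h)).2
        simpa using this
  · have hl1 : (D.liftWalk pw 0).length = ℓ - 2 := by rw [D.liftWalk_length]; exact hlen
    have hl2 : (D.liftWalk pw 1).length = ℓ - 2 := by rw [D.liftWalk_length]; exact hlen
    simp only [SimpleGraph.Walk.length_cons, rest, w1, w2, SimpleGraph.Walk.length_append,
      SimpleGraph.Walk.length_map, SimpleGraph.Walk.length_reverse,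
      SimpleGraph.Walk.length_nil, hl1, hl2]
    erw [SimpleGraph.Walk.length_append, SimpleGraph.Walk.length_cons,
      SimpleGraph.Walk.length_cons, SimpleGraph.Walk.length_append,
      SimpleGraph.Walk.length_reverse, SimpleGraph.Walk.length_cons,
      SimpleGraph.Walk.length_nil, SimpleGraph.Walk.length_map, SimpleGraph.Walk.length_map]
    rw [hl1, hl2]
    omega
  · rw [SimpleGraph.Walk.support_cons, hsup]
    simp
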